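/- For n ≥ 1, the gamma-polynomial of the q-analogue [n] = 1+q+...+q^{n-1} is F_{n-1}(1,-z): that is, [n]_q = Σ_{j≥0} (-1)^j·C(n-1-j, j)·q^j·(1+q)^{n-1-2j}. -/

import Mathlib

open Polynomial

private noncomputable def G (m : ℕ) : Polynomial ℤ :=
  ∑ j ∈ Finset.range (m+1),
    C ((-1 : ℤ) ^ j * ((m - j).choose j : ℤ)) * X ^ j * (1 + X) ^ (m - 2 * j)

private lemma choose_pascal (m t : ℕ) :
    (m + 1 - t).choose (t+1) = (m - t).choose t + (m - t).choose (t+1) := by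
  rcases le_or_gt t m with h | h
  · have h1 : m + 1 - t = (m - t) + 1 := by omega
    rw [h1, Nat.choose_succ_succ]
  · have h1 : m + 1 - t = 0 := by omega
    have h2 : m - t = 0 := by omega
    rw [h1, h2]
    simp [Nat.choose_eq_zero_of_lt (show (0:ℕ) < t + 1 by omega),
      Nat.choose_eq_zero_of_lt (show (0:ℕ) < t by omega)]

private lemma G_rec (m : ℕ) : G (m+2) = (1 + X) * G (m+1) - X * G m := by
  have hXG : X * G m = ∑ t ∈ Finset.range (m+1),
      C ((-1 : ℤ) ^ t * ((m - t).choose t : ℤ)) * X ^ (t+1) * (1 + X) ^ (m - 2 * t) := by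
    rw [G, Finset.mul_sum]
    refine Finset.sum_congr rfl fun t _ => ?_
    ring
  have hstep : G (m+2) =
      (∑ t ∈ Finset.range (m+2),
        C (-((-1 : ℤ) ^ t * ((m - t).choose (t+1) : ℤ))) * X ^ (t+1) * (1 + X) ^ (m - 2 * t))
      + (∑ t ∈ Finset.range (m+2),
        C (-((-1 : ℤ) ^ t * ((m - t).choose t : ℤ))) * X ^ (t+1) * (1 + X) ^ (m - 2 * t))
      + (1 + X) ^ (m+2) := by
    rw [G, Finset.sum_range_succ']
    have h0 : C ((-1 : ℤ) ^ 0 * (((m+2) - 0).choose 0 : ℤ)) * X ^ 0 * (1 + X) ^ ((m+2) - 2*0)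
        = (1 + X) ^ (m+2) := by simp
    rw [h0, ← Finset.sum_add_distrib]
    congr 1
    refine Finset.sum_congr rfl fun t _ => ?_
    have e1 : m + 2 - (t+1) = m + 1 - t := by omega
    have e2 : m + 2 - 2*(t+1) = m - 2*t := by omega
    rw [e1, e2, choose_pascal]
    have e3 : (-1 : ℤ) ^ (t+1) * (((m - t).choose t + (m - t).choose (t+1) : ℕ) : ℤ)
        = (-((-1 : ℤ) ^ t * ((m - t).choose (t+1) : ℤ)))
          + (-((-1 : ℤ) ^ t * ((m - t).choose t : ℤ))) := by
      push_cast; ring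
    rw [e3, map_add, add_mul, add_mul]
  have hsecond : (∑ t ∈ Finset.range (m+2),
      C (-((-1 : ℤ) ^ t * ((m - t).choose t : ℤ))) * X ^ (t+1) * (1 + X) ^ (m - 2 * t))
      = - (X * G m) := by
    rw [Finset.sum_range_succ, hXG]
    have hz : ((m - (m+1)).choose (m+1) : ℤ) = 0 := by
      have h2 : m - (m+1) = 0 := by omega
      rw [h2, Nat.choose_eq_zero_of_lt (by omega)]; simp
    rw [hz]
    simp only [mul_zero, neg_zero, map_zero, zero_mul, add_zero]
    rw [← Finset.sum_neg_distrib]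
    refine Finset.sum_congr rfl fun t _ => ?_
    rw [map_neg]; ring
  have hA : (∑ t ∈ Finset.range (m+2),
      C (-((-1 : ℤ) ^ t * ((m - t).choose (t+1) : ℤ))) * X ^ (t+1) * (1 + X) ^ (m - 2 * t))
      = (∑ t ∈ Finset.range (m+1),
      C (-((-1 : ℤ) ^ t * ((m - t).choose (t+1) : ℤ))) * X ^ (t+1) * (1 + X) ^ (m - 2 * t)) := by
    rw [Finset.sum_range_succ]
    have hz : ((m - (m+1)).choose (m+1+1) : ℤ) = 0 := by
      have h2 : m - (m+1) = 0 := by omega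
      rw [h2, Nat.choose_eq_zero_of_lt (by omega)]; simp
    rw [hz]
    simp
  have hfirst : (1 + X) * G (m+1) = (∑ t ∈ Finset.range (m+1),
      C (-((-1 : ℤ) ^ t * ((m - t).choose (t+1) : ℤ))) * X ^ (t+1) * (1 + X) ^ (m - 2 * t))
      + (1 + X) ^ (m+2) := by
    rw [G, Finset.mul_sum, Finset.sum_range_succ']
    refine congrArg₂ (· + ·) ?_ ?_
    · refine Finset.sum_congr rfl fun t _ => ?_
      have e1 : m + 1 - (t+1) = m - t := by omega
      rw [e1]
      by_cases hc : (m - t).choose (t+1) = 0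
      · rw [hc]; simp
      · have hle : t + 1 ≤ m - t := by
          by_contra hlt
          exact hc (Nat.choose_eq_zero_of_lt (by omega))
        have e2 : m + 1 - 2*(t+1) + 1 = m - 2*t := by omega
        have e4 : (-((-1 : ℤ) ^ t * ((m - t).choose (t+1) : ℤ)))
            = (-1 : ℤ) ^ (t+1) * ((m - t).choose (t+1) : ℤ) := by ring
        rw [e4, ← e2, pow_succ]
        ring
    · simp [← pow_succ']
  rw [hstep, hA, hsecond, hfirst]
  abel

private lemma mulX_sum (k : ℕ) :
    X * (∑ i ∈ Finset.range k, (X : Polynomial ℤ) ^ i)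
      = (∑ i ∈ Finset.range (k+1), (X : Polynomial ℤ) ^ i) - 1 := by
  rw [Finset.mul_sum, Finset.sum_range_succ']
  simp [pow_succ, mul_comm]

private lemma S_eq_G : ∀ m : ℕ, (∑ i ∈ Finset.range (m+1), (X : Polynomial ℤ) ^ i) = G m := by
  intro m
  induction m using Nat.strong_induction_on with
  | _ m ih =>
    match m with
    | 0 => simp [G]
    | 1 =>
      rw [G]
      norm_num [Finset.sum_range_succ]
    | (t+2) =>
      rw [G_rec, ← ih (t+1) (by omega), ← ih t (by omega),
        add_mul, one_mul, mulX_sum (t+2), mulX_sum (t+1)]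
      ring

theorem gamma_polynomial_q_analogue (n : ℕ) (hn : 1 ≤ n) :
    (∑ i ∈ Finset.range n, (X : Polynomial ℤ) ^ i) =
      ∑ j ∈ Finset.range n,
        C ((-1 : ℤ) ^ j * ((n - 1 - j).choose j : ℤ)) * X ^ j *
          (1 + X) ^ (n - 1 - 2 * j) := by
  obtain ⟨m, rfl⟩ : ∃ m, n = m + 1 := ⟨n - 1, by omega⟩
  simp only [Nat.add_sub_cancel]
  exact S_eq_G m
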